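/- arXiv:2304.08119 — 8 statements merged into one kernel-verified Lean document; each statement's English description precedes it below -/
import Mathlib

section
/- Let m ≥ 2, let x, y ∈ ℝ² be linearly independent, μ₁, μ₂ nonzero reals, and A = μ₁ x^{⊗m} + μ₂ y^{⊗m}, so (A u^{m-1})_i = μ₁ x_i (xᵀu)^{m-1} + μ₂ y_i (yᵀu)^{m-1}. Then any nonzero solution u of TCP(A, 0) has exactly one nonzero component. -/
/-- Action of `A = c₁ x^{⊗m} + c₂ y^{⊗m}` on `u ∈ ℝ²`. -/
def act2 (m : ℕ) (c₁ c₂ : ℝ) (x y u : Fin 2 → ℝ) : Fin 2 → ℝ :=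
  fun i => c₁ * x i * (∑ j, x j * u j) ^ (m - 1) +
           c₂ * y i * (∑ j, y j * u j) ^ (m - 1)

/-- Any nonzero solution of `TCP(μ₁ x^{⊗m} + μ₂ y^{⊗m}, 0)` with `x, y` linearly
independent has exactly one nonzero component. -/
theorem tcp_zero_sol_one_nonzero (m : ℕ) (hm : 2 ≤ m)
    (x y : Fin 2 → ℝ) (hxy : LinearIndependent ℝ ![x, y])
    (μ₁ μ₂ : ℝ) (h1 : μ₁ ≠ 0) (h2 : μ₂ ≠ 0)
    (u : Fin 2 → ℝ) (hu : u ≠ 0)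
    (h0 : ∀ i, 0 ≤ u i)
    (h1' : ∀ i, 0 ≤ act2 m μ₁ μ₂ x y u i)
    (h2' : (∑ i, u i * act2 m μ₁ μ₂ x y u i) = 0) :
    (u 0 ≠ 0 ∧ u 1 = 0) ∨ (u 0 = 0 ∧ u 1 ≠ 0) := by
  by_cases hu0 : u 0 = 0
  · by_cases hu1 : u 1 = 0
    · exact absurd (funext fun i => by fin_cases i <;> simpa [hu0, hu1]) hu
    · exact Or.inr ⟨hu0, hu1⟩
  · by_cases hu1 : u 1 = 0
    · exact Or.inl ⟨hu0, hu1⟩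
    · exfalso
      have hsum : u 0 * act2 m μ₁ μ₂ x y u 0 + u 1 * act2 m μ₁ μ₂ x y u 1 = 0 := by
        simpa [Fin.sum_univ_two] using h2'
      have hnn0 : 0 ≤ u 0 * act2 m μ₁ μ₂ x y u 0 := mul_nonneg (h0 0) (h1' 0)
      have hnn1 : 0 ≤ u 1 * act2 m μ₁ μ₂ x y u 1 := mul_nonneg (h0 1) (h1' 1)
      have hz0 : u 0 * act2 m μ₁ μ₂ x y u 0 = 0 := by linarith
      have hz1 : u 1 * act2 m μ₁ μ₂ x y u 1 = 0 := by linarith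
      have hA0 : act2 m μ₁ μ₂ x y u 0 = 0 := by
        rcases mul_eq_zero.mp hz0 with h | h
        · exact absurd h hu0
        · exact h
      have hA1 : act2 m μ₁ μ₂ x y u 1 = 0 := by
        rcases mul_eq_zero.mp hz1 with h | h
        · exact absurd h hu1
        · exact h
      set s : ℝ := ∑ j, x j * u j with hs_def
      set t : ℝ := ∑ j, y j * u j with ht_def
      have e0 : μ₁ * x 0 * s ^ (m - 1) + μ₂ * y 0 * t ^ (m - 1) = 0 := hA0
      have e1 : μ₁ * x 1 * s ^ (m - 1) + μ₂ * y 1 * t ^ (m - 1) = 0 := hA1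
      have hcomb : (μ₁ * s ^ (m - 1)) • x + (μ₂ * t ^ (m - 1)) • y = 0 := by
        funext i
        fin_cases i
        · simpa [Pi.add_apply, Pi.smul_apply, smul_eq_mul, mul_comm, mul_assoc,
            mul_left_comm] using e0
        · simpa [Pi.add_apply, Pi.smul_apply, smul_eq_mul, mul_comm, mul_assoc,
            mul_left_comm] using e1
      obtain ⟨ha, hb⟩ := LinearIndependent.pair_iff.mp hxy _ _ hcomb
      have hmne : m - 1 ≠ 0 := by omega
      have hs0 : s = 0 := by
        rcases mul_eq_zero.mp ha with h | h
        · exact absurd h h1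
        · exact pow_eq_zero_iff hmne |>.mp h
      have ht0 : t = 0 := by
        rcases mul_eq_zero.mp hb with h | h
        · exact absurd h h2
        · exact pow_eq_zero_iff hmne |>.mp h
      have hs' : x 0 * u 0 + x 1 * u 1 = 0 := by
        simpa [hs_def, Fin.sum_univ_two] using hs0
      have ht' : y 0 * u 0 + y 1 * u 1 = 0 := by
        simpa [ht_def, Fin.sum_univ_two] using ht0
      have key : (y 0 * x 1 - x 0 * y 1) * u 1 = 0 := by
        linear_combination y 0 * hs' - x 0 * ht'
      have key2 : y 0 * x 1 - x 0 * y 1 = 0 := by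
        rcases mul_eq_zero.mp key with h | h
        · exact h
        · exact absurd h hu1
      have hcomb2 : (y 0) • x + (-(x 0)) • y = 0 := by
        funext i
        fin_cases i
        · simp [Pi.add_apply, Pi.smul_apply, smul_eq_mul]; ring
        · show y 0 * x 1 + -x 0 * y 1 = 0
          linarith [key2]
      obtain ⟨hy0, hx0'⟩ := LinearIndependent.pair_iff.mp hxy _ _ hcomb2
      have hx0 : x 0 = 0 := by linarith [neg_eq_zero.mp hx0']
      have hx1 : x 1 = 0 := by
        have : x 1 * u 1 = 0 := by linear_combination hs' - u 0 * hx0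
        rcases mul_eq_zero.mp this with h | h
        · exact h
        · exact absurd h hu1
      have hxzero : x = 0 := funext fun i => by fin_cases i <;> simpa [hx0, hx1]
      exact (hxy.ne_zero 0) (by simpa using hxzero)
end

section
/- Let m ≥ 3 be odd and x, y ∈ ℝ² be linearly independent with A = x^{⊗m} + y^{⊗m}, so (A u^{m-1})_i = x_i (xᵀu)^{m-1} + y_i (yᵀu)^{m-1}. If A is not an R₀-tensor, then either (y₁ = −x₁, x₁ ≠ 0, and x₂ + y₂ > 0) or (y₂ = −x₂, x₂ ≠ 0, and x₁ + y₁ > 0). -/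
private lemma det_ne_zero_aux (x y : Fin 2 → ℝ) (hxy : LinearIndependent ℝ ![x, y]) :
    x 0 * y 1 - x 1 * y 0 ≠ 0 := by
  rw [LinearIndependent.pair_iff] at hxy
  intro hD
  -- first: y 1 • x - x 1 • y = 0
  have h1 : y 1 = 0 ∧ x 1 = 0 := by
    have := hxy (y 1) (-(x 1)) (by
      funext i
      fin_cases i <;> simp <;> ring_nf <;> nlinarith [hD])
    exact ⟨this.1, by simpa using this.2⟩
  have h2 : y 0 = 0 ∧ x 0 = 0 := by
    have := hxy (y 0) (-(x 0)) (by
      funext i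
      fin_cases i <;> simp <;> ring_nf <;> nlinarith [hD])
    exact ⟨this.1, by simpa using this.2⟩
  have hx0 : x = 0 := by
    funext i; fin_cases i
    · exact h2.2
    · exact h1.2
  have := hxy 1 0 (by simp [hx0])
  exact one_ne_zero this.1

/-- For odd `m ≥ 3` and linearly independent `x, y`, if `A = x^{⊗m} + y^{⊗m}` is not
an R₀-tensor, then `(y₁ = -x₁, x₁ ≠ 0, x₂ + y₂ > 0)` or `(y₂ = -x₂, x₂ ≠ 0,
x₁ + y₁ > 0)`. -/
theorem odd_not_R0_structure (m : ℕ) (hm : 3 ≤ m) (hodd : Odd m)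
    (x y : Fin 2 → ℝ) (hxy : LinearIndependent ℝ ![x, y])
    (hnotR0 : ¬ (∀ u : Fin 2 → ℝ,
      (∀ i, 0 ≤ u i) →
      (∀ i, 0 ≤ act2 m 1 1 x y u i) →
      (∑ i, u i * act2 m 1 1 x y u i) = 0 →
      u = 0)) :
    (y 0 = -(x 0) ∧ x 0 ≠ 0 ∧ 0 < x 1 + y 1) ∨
    (y 1 = -(x 1) ∧ x 1 ≠ 0 ∧ 0 < x 0 + y 0) := by
  push_neg at hnotR0
  obtain ⟨u, hu0, hAu, hsum, hune⟩ := hnotR0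
  have hD := det_ne_zero_aux x y hxy
  set s : ℝ := x 0 * u 0 + x 1 * u 1 with hs
  set t : ℝ := y 0 * u 0 + y 1 * u 1 with ht
  have hact : ∀ i, act2 m 1 1 x y u i = x i * s ^ (m - 1) + y i * t ^ (m - 1) := by
    intro i
    simp [act2, Fin.sum_univ_two, hs, ht]
  have heven : Even (m - 1) := by
    obtain ⟨k, hk⟩ := hodd
    have : m - 1 = 2 * k := by omega
    exact this ▸ even_two_mul k
  -- from the sum condition: s ^ m + t ^ m = 0
  have hsm : s ^ m + t ^ m = 0 := by
    have hsum' : u 0 * (x 0 * s ^ (m - 1) + y 0 * t ^ (m - 1)) +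
        u 1 * (x 1 * s ^ (m - 1) + y 1 * t ^ (m - 1)) = 0 := by
      rw [Fin.sum_univ_two, hact 0, hact 1] at hsum
      exact hsum
    have hms : m - 1 + 1 = m := by omega
    calc s ^ m + t ^ m = s * s ^ (m - 1) + t * t ^ (m - 1) := by
          rw [← pow_succ' s, ← pow_succ' t, hms]
      _ = u 0 * (x 0 * s ^ (m - 1) + y 0 * t ^ (m - 1)) +
          u 1 * (x 1 * s ^ (m - 1) + y 1 * t ^ (m - 1)) := by rw [hs, ht]; ring
      _ = 0 := hsum'
  have hts : t = -s := by
    have : t ^ m = (-s) ^ m := by rw [hodd.neg_pow]; linarith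
    exact hodd.strictMono_pow.injective this
  by_cases hs0 : s = 0
  · -- then t = 0 and u = 0, contradiction
    exfalso
    have ht0 : t = 0 := by rw [hts, hs0, neg_zero]
    apply hune
    funext i
    have e1 : x 0 * u 0 + x 1 * u 1 = 0 := by rw [hs] at hs0; exact hs0
    have e2 : y 0 * u 0 + y 1 * u 1 = 0 := by rw [ht] at ht0; exact ht0
    have hu0' : u 0 = 0 := by
      have h' : u 0 * (x 0 * y 1 - x 1 * y 0) = 0 := by
        linear_combination y 1 * e1 - x 1 * e2
      rcases mul_eq_zero.mp h' with h | h
      · exact h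
      · exact absurd h hD
    have hu1' : u 1 = 0 := by
      have h' : u 1 * (x 0 * y 1 - x 1 * y 0) = 0 := by
        linear_combination x 0 * e2 - y 0 * e1
      rcases mul_eq_zero.mp h' with h | h
      · exact h
      · exact absurd h hD
    fin_cases i <;> simp [hu0', hu1']
  · -- s ≠ 0, so s^(m-1) > 0
    have hP : 0 < s ^ (m - 1) := heven.pow_pos hs0
    have htpow : t ^ (m - 1) = s ^ (m - 1) := by rw [hts, heven.neg_pow]
    have hxy0 : 0 ≤ x 0 + y 0 := by
      have h := hAu 0
      rw [hact 0, htpow] at h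
      nlinarith
    have hxy1 : 0 ≤ x 1 + y 1 := by
      have h := hAu 1
      rw [hact 1, htpow] at h
      nlinarith
    have hcomp : u 0 * (x 0 + y 0) = 0 ∧ u 1 * (x 1 + y 1) = 0 := by
      have hst : s + t = 0 := by rw [hts]; ring
      have : u 0 * (x 0 + y 0) + u 1 * (x 1 + y 1) = 0 := by
        rw [hs, ht] at hst; linarith [hst]
      constructor <;> nlinarith [mul_nonneg (hu0 0) hxy0, mul_nonneg (hu0 1) hxy1]
    -- u ≠ 0 so some component positive
    have hui : 0 < u 0 ∨ 0 < u 1 := by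
      by_contra h
      push_neg at h
      apply hune
      funext i
      fin_cases i
      · simpa using le_antisymm h.1 (hu0 0)
      · simpa using le_antisymm h.2 (hu0 1)
    rcases hui with h0 | h1
    · left
      have hy0 : y 0 = -(x 0) := by
        have := hcomp.1
        have : x 0 + y 0 = 0 := by
          rcases mul_eq_zero.mp this with h | h
          · exact absurd h (ne_of_gt h0)
          · exact h
        linarith
      refine ⟨hy0, ?_, ?_⟩
      · intro hx0
        apply hD
        rw [hy0, hx0]; ring
      · rcases lt_or_eq_of_le hxy1 with h | h
        · exact h
        · exfalso; apply hD
          have hy1 : y 1 = -(x 1) := by linarith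
          rw [hy0, hy1]; ring
    · right
      have hy1 : y 1 = -(x 1) := by
        have := hcomp.2
        have : x 1 + y 1 = 0 := by
          rcases mul_eq_zero.mp this with h | h
          · exact absurd h (ne_of_gt h1)
          · exact h
        linarith
      refine ⟨hy1, ?_, ?_⟩
      · intro hx1
        apply hD
        rw [hy1, hx1]; ring
      · rcases lt_or_eq_of_le hxy0 with h | h
        · exact h
        · exfalso; apply hD
          have hy0 : y 0 = -(x 0) := by linarith
          rw [hy1, hy0]; ring
end

section
/- Let m ≥ 3 be odd and x, y ∈ ℝ² be linearly independent with A = x^{⊗m} + y^{⊗m}. Suppose y₁ = −x₁, x₁ ≠ 0, and x₂ + y₂ > 0. Then A is not a Q-tensor: in fact, for q = (−|x₁|, |x₂| + |y₂|) the problem TCP(A, q) has no solution. -/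
/-- `u` solves `TCP(A, q)` in dimension 2. -/
def tcpSol2 (F : (Fin 2 → ℝ) → (Fin 2 → ℝ)) (q u : Fin 2 → ℝ) : Prop :=
  (∀ i, 0 ≤ u i) ∧ (∀ i, 0 ≤ F u i + q i) ∧ (∑ i, u i * (F u i + q i)) = 0

/-- For odd `m ≥ 3`, linearly independent `x, y` with `y₁ = -x₁`, `x₁ ≠ 0`,
`x₂ + y₂ > 0`, the tensor `A = x^{⊗m} + y^{⊗m}` is not a Q-tensor: for
`q = (-|x₁|, |x₂| + |y₂|)`, `TCP(A, q)` has no solution. -/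
theorem odd_case_not_Q (m : ℕ) (hm : 3 ≤ m) (hodd : Odd m)
    (x y : Fin 2 → ℝ) (hxy : LinearIndependent ℝ ![x, y])
    (h1 : y 0 = -(x 0)) (h2 : x 0 ≠ 0) (h3 : 0 < x 1 + y 1) :
    (¬ ∃ u, tcpSol2 (act2 m 1 1 x y) ![-(|x 0|), |x 1| + |y 1|] u) ∧
    ¬ (∀ q : Fin 2 → ℝ, ∃ u, tcpSol2 (act2 m 1 1 x y) q u) := by
  have key : ¬ ∃ u, tcpSol2 (act2 m 1 1 x y) ![-(|x 0|), |x 1| + |y 1|] u := by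
    rintro ⟨u, hu, hFq, hsum⟩
    have he : Even (m - 1) := Nat.Odd.sub_odd hodd odd_one
    have hm1 : m - 1 + 1 = m := by omega
    set s : ℝ := x 0 * u 0 + x 1 * u 1 with hs
    set t : ℝ := y 0 * u 0 + y 1 * u 1 with ht
    have hu0 := hu 0
    have hu1 := hu 1
    have hF0 : 0 ≤ x 0 * s ^ (m - 1) + y 0 * t ^ (m - 1) + -(|x 0|) := by
      simpa only [act2, Fin.sum_univ_two, Matrix.cons_val_zero, Matrix.cons_val_one,
        Matrix.head_cons, one_mul, ← hs, ← ht] using hFq 0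
    have hF1 : 0 ≤ x 1 * s ^ (m - 1) + y 1 * t ^ (m - 1) + (|x 1| + |y 1|) := by
      simpa only [act2, Fin.sum_univ_two, Matrix.cons_val_zero, Matrix.cons_val_one,
        Matrix.head_cons, one_mul, ← hs, ← ht] using hFq 1
    have hsum' : u 0 * (x 0 * s ^ (m - 1) + y 0 * t ^ (m - 1) + -(|x 0|)) +
        u 1 * (x 1 * s ^ (m - 1) + y 1 * t ^ (m - 1) + (|x 1| + |y 1|)) = 0 := by
      simpa only [act2, Fin.sum_univ_two, Matrix.cons_val_zero, Matrix.cons_val_one,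
        Matrix.head_cons, one_mul, ← hs, ← ht] using hsum
    set a : ℝ := s ^ (m - 1) with ha_def
    set b : ℝ := t ^ (m - 1) with hb_def
    have ha : 0 ≤ a := he.pow_nonneg s
    have hb : 0 ≤ b := he.pow_nonneg t
    have hc0 : u 0 * (x 0 * a + y 0 * b + -(|x 0|)) = 0 := by
      have n0 : 0 ≤ u 0 * (x 0 * a + y 0 * b + -(|x 0|)) := mul_nonneg hu0 hF0
      have n1 : 0 ≤ u 1 * (x 1 * a + y 1 * b + (|x 1| + |y 1|)) := mul_nonneg hu1 hF1
      linarith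
    have hc1 : u 1 * (x 1 * a + y 1 * b + (|x 1| + |y 1|)) = 0 := by
      have n0 : 0 ≤ u 0 * (x 0 * a + y 0 * b + -(|x 0|)) := mul_nonneg hu0 hF0
      linarith
    have habs0 : 0 < |x 0| := abs_pos.mpr h2
    -- Step 1: u 1 ≠ 0
    have hu1ne : u 1 ≠ 0 := by
      intro h
      have hst : t = -s := by
        rw [hs, ht, h, h1]; ring
      have hab : b = a := by rw [hb_def, ha_def, hst, he.neg_pow]
      rw [h1, hab] at hF0
      nlinarith
    have hT1 : x 1 * a + y 1 * b + (|x 1| + |y 1|) = 0 :=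
      (mul_eq_zero.mp hc1).resolve_left hu1ne
    have hx1a : x 1 ≤ |x 1| := le_abs_self _
    have hx1b : -(x 1) ≤ |x 1| := neg_le_abs _
    have hy1a : y 1 ≤ |y 1| := le_abs_self _
    have hy1b : -(y 1) ≤ |y 1| := neg_le_abs _
    rcases eq_or_lt_of_le hu0 with hu0z | hu0pos
    · -- u 0 = 0
      have hsv : s = x 1 * u 1 := by rw [hs, ← hu0z]; ring
      have htv : t = y 1 * u 1 := by rw [ht, ← hu0z]; ring
      have hmono : (-(y 1)) ^ m ≤ (x 1) ^ m :=
        (hodd.strictMono_pow (R := ℝ)).monotone (by linarith)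
      have hpow : -((y 1) ^ m) ≤ (x 1) ^ m := by rwa [hodd.neg_pow] at hmono
      have hxa : x 1 * a = x 1 ^ m * u 1 ^ (m - 1) := by
        rw [ha_def, hsv, mul_pow, ← mul_assoc, ← pow_succ', hm1]
      have hyb : y 1 * b = y 1 ^ m * u 1 ^ (m - 1) := by
        rw [hb_def, htv, mul_pow, ← mul_assoc, ← pow_succ', hm1]
      have hup : 0 ≤ u 1 ^ (m - 1) := pow_nonneg hu1 _
      rw [hxa, hyb] at hT1
      nlinarith [mul_nonneg (by linarith : (0:ℝ) ≤ x 1 ^ m + y 1 ^ m) hup]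
    · -- u 0 > 0
      have hT0 : x 0 * a + y 0 * b + -(|x 0|) = 0 :=
        (mul_eq_zero.mp hc0).resolve_left (ne_of_gt hu0pos)
      rw [h1] at hT0
      rcases lt_or_gt_of_ne h2 with hx0neg | hx0pos
      · -- x 0 < 0 : b = a + 1
        have hxabs : |x 0| = -(x 0) := abs_of_neg hx0neg
        rw [hxabs] at hT0
        have hba : b = a + 1 := by
          have : x 0 * (a - b + 1) = 0 := by ring_nf; ring_nf at hT0; linarith
          have := (mul_eq_zero.mp this).resolve_left h2
          linarith
        rw [hba] at hT1
        have hT1' : x 1 * a + y 1 * a + y 1 + |x 1| + |y 1| = 0 := by linear_combination hT1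
        have hprod : 0 ≤ x 1 * a + y 1 * a := by
          have h := mul_nonneg h3.le ha
          linarith [h, (by ring : (x 1 + y 1) * a = x 1 * a + y 1 * a)]
        linarith [hT1', hprod, hx1b, hy1a, hy1b, h3]
      · -- x 0 > 0 : a = b + 1
        have hxabs : |x 0| = x 0 := abs_of_pos hx0pos
        rw [hxabs] at hT0
        have hab : a = b + 1 := by
          have : x 0 * (a - b - 1) = 0 := by ring_nf; ring_nf at hT0; linarith
          have := (mul_eq_zero.mp this).resolve_left h2
          linarith
        rw [hab] at hT1
        have hT1' : x 1 * b + y 1 * b + x 1 + |x 1| + |y 1| = 0 := by linear_combination hT1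
        have hprod : 0 ≤ x 1 * b + y 1 * b := by
          have h := mul_nonneg h3.le hb
          linarith [h, (by ring : (x 1 + y 1) * b = x 1 * b + y 1 * b)]
        linarith [hT1', hprod, hx1a, hx1b, hy1b, h3]
  exact ⟨key, fun h => key (h _)⟩
end

section
/- Let m ≥ 3 be odd and A ∈ S(m,2) with A = x^{⊗m} + y^{⊗m} for linearly independent x, y ∈ ℝ². If A is a Q-tensor, then A is an R₀-tensor. -/
lemma noSolution (n : ℕ) (hn : Even n) (p r t vi vj α β : ℝ)
    (hp : 0 < p) (hrt : 0 ≤ r + t) (hvi : 0 ≤ vi) (hvj : 0 ≤ vj)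
    (hα : α = p * vi + r * vj) (hβ : β = -(p * vi) + t * vj)
    (h1 : 0 ≤ p * α ^ n - p * β ^ n - p)
    (h2 : 0 ≤ r * α ^ n + t * β ^ n + (|r| + |t| + 1))
    (hsum : vi * (p * α ^ n - p * β ^ n - p) +
            vj * (r * α ^ n + t * β ^ n + (|r| + |t| + 1)) = 0) : False := by
  have hβn : 0 ≤ β ^ n := hn.pow_nonneg β
  have h1' : 1 ≤ α ^ n - β ^ n := by nlinarith
  have hab : 0 ≤ α + β := by nlinarith [mul_nonneg hrt hvj]
  have hα0 : 0 < α := by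
    by_contra h
    push_neg at h
    have hβα : -α ≤ β := by linarith
    have : α ^ n ≤ β ^ n := by
      calc α ^ n = (-α) ^ n := (hn.neg_pow α).symm
        _ ≤ β ^ n := pow_le_pow_left₀ (by linarith) hβα n
    linarith
  have hvj0 : 0 < vj := by
    rcases eq_or_lt_of_le hvj with h | h
    · exfalso
      have hβα : β = -α := by rw [hα, hβ, ← h]; try ring
      rw [hβα, hn.neg_pow] at h1'
      linarith
    · exact h
  have hterm1 : 0 ≤ vi * (p * α ^ n - p * β ^ n - p) := mul_nonneg hvi h1
  have hterm2 : 0 ≤ vj * (r * α ^ n + t * β ^ n + (|r| + |t| + 1)) := mul_nonneg hvj h2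
  have hX0 : r * α ^ n + t * β ^ n + (|r| + |t| + 1) = 0 := by
    have hz : vj * (r * α ^ n + t * β ^ n + (|r| + |t| + 1)) = 0 := by linarith
    rcases mul_eq_zero.mp hz with h' | h'
    · exact absurd h' (ne_of_gt hvj0)
    · exact h'
  have habs : 0 ≤ |r| + |t| := by positivity
  rcases le_or_gt 0 r with hr | hr
  · have e1 : 0 ≤ r * (α ^ n - β ^ n) := mul_nonneg hr (by linarith)
    have e2 : 0 ≤ (r + t) * β ^ n := mul_nonneg hrt hβn
    nlinarith
  · have hvi0 : 0 < vi := by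
      rcases eq_or_lt_of_le hvi with h | h
      · exfalso
        have hav : α = r * vj := by rw [hα, ← h]; try ring
        nlinarith [mul_neg_of_neg_of_pos hr hvj0]
      · exact h
    have hY0 : p * α ^ n - p * β ^ n - p = 0 := by
      have hz : vi * (p * α ^ n - p * β ^ n - p) = 0 := by linarith
      rcases mul_eq_zero.mp hz with h' | h'
      · exact absurd h' (ne_of_gt hvi0)
      · exact h'
    have heq : α ^ n = β ^ n + 1 := by
      have : p * (α ^ n - β ^ n - 1) = 0 := by linarith
      rcases mul_eq_zero.mp this with h' | h'
      · exact absurd h' (ne_of_gt hp)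
      · linarith
    rw [heq] at hX0
    have e2 : 0 ≤ (r + t) * β ^ n := mul_nonneg hrt hβn
    have hr' : |r| = -r := abs_of_neg hr
    have ht' : 0 ≤ |t| := abs_nonneg t
    nlinarith

/-- For odd `m ≥ 3` and linearly independent `x, y`, if `A = x^{⊗m} + y^{⊗m}` is a
Q-tensor then it is an R₀-tensor. -/
theorem odd_Q_implies_R0 (m : ℕ) (hm : 3 ≤ m) (hodd : Odd m)
    (x y : Fin 2 → ℝ) (hxy : LinearIndependent ℝ ![x, y])
    (hQ : ∀ q : Fin 2 → ℝ, ∃ u, tcpSol2 (act2 m 1 1 x y) q u) :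
    ∀ u : Fin 2 → ℝ, tcpSol2 (act2 m 1 1 x y) 0 u → u = 0 := by
  have hpair : ∀ s t : ℝ, s • x + t • y = 0 → s = 0 ∧ t = 0 :=
    LinearIndependent.pair_iff.mp hxy
  have hdet : x 0 * y 1 - x 1 * y 0 ≠ 0 := by
    intro hD
    have c1 : (y 1) • x + (-(x 1)) • y = 0 := by
      funext i
      fin_cases i
      · show y 1 * x 0 + -(x 1) * y 0 = 0
        linear_combination hD
      · show y 1 * x 1 + -(x 1) * y 1 = 0
        ring
    have c2 : (y 0) • x + (-(x 0)) • y = 0 := by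
      funext i
      fin_cases i
      · show y 0 * x 0 + -(x 0) * y 0 = 0
        ring
      · show y 0 * x 1 + -(x 0) * y 1 = 0
        linear_combination -hD
    obtain ⟨e1, e2⟩ := hpair _ _ c1
    obtain ⟨e3, e4⟩ := hpair _ _ c2
    have hx0 : x = 0 := by
      funext i
      fin_cases i
      · show x 0 = 0
        linarith [neg_eq_zero.mp e4]
      · show x 1 = 0
        linarith [neg_eq_zero.mp e2]
    obtain ⟨e5, _⟩ := hpair 1 0 (by rw [hx0]; funext i; simp)
    exact one_ne_zero e5
  intro u hu
  obtain ⟨hu0, huF, husum⟩ := hu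
  by_contra hne
  have hneven : Even (m - 1) := Nat.Odd.sub_odd hodd odd_one
  have hm1 : m - 1 + 1 = m := by omega
  obtain ⟨a, ha2⟩ : ∃ a, a = x 0 * u 0 + x 1 * u 1 := ⟨_, rfl⟩
  obtain ⟨b, hb2⟩ : ∃ b, b = y 0 * u 0 + y 1 * u 1 := ⟨_, rfl⟩
  have hFu : ∀ i, act2 m 1 1 x y u i = x i * a ^ (m-1) + y i * b ^ (m-1) := by
    intro i
    simp only [act2, Fin.sum_univ_two, one_mul]
    rw [← ha2, ← hb2]
  have hsum' : u 0 * (x 0 * a ^ (m-1) + y 0 * b ^ (m-1)) +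
      u 1 * (x 1 * a ^ (m-1) + y 1 * b ^ (m-1)) = 0 := by
    rw [Fin.sum_univ_two] at husum
    simpa [hFu 0, hFu 1] using husum
  have hm_ab : a ^ m + b ^ m = 0 := by
    have e1 : a ^ m = a ^ (m-1) * a := by rw [← hm1, pow_succ]; rw [hm1]
    have e2 : b ^ m = b ^ (m-1) * b := by rw [← hm1, pow_succ]; rw [hm1]
    rw [e1, e2]
    linear_combination hsum' + a ^ (m-1) * ha2 + b ^ (m-1) * hb2
  have hba : b = -a := by
    have h1 : b ^ m = (-a) ^ m := by rw [hodd.neg_pow]; linarith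
    exact (Odd.strictMono_pow (R := ℝ) hodd).injective h1
  by_cases ha0 : a = 0
  · apply hne
    have hb0 : b = 0 := by rw [hba, ha0, neg_zero]
    have e1 : x 0 * u 0 + x 1 * u 1 = 0 := by rw [← ha2]; exact ha0
    have e2 : y 0 * u 0 + y 1 * u 1 = 0 := by rw [← hb2]; exact hb0
    have hu0' : u 0 = 0 := by
      have h : u 0 * (x 0 * y 1 - x 1 * y 0) = 0 := by
        linear_combination y 1 * e1 - x 1 * e2
      rcases mul_eq_zero.mp h with h | h
      · exact h
      · exact absurd h hdet
    have hu1' : u 1 = 0 := by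
      have h : u 1 * (x 0 * y 1 - x 1 * y 0) = 0 := by
        linear_combination x 0 * e2 - y 0 * e1
      rcases mul_eq_zero.mp h with h | h
      · exact h
      · exact absurd h hdet
    funext i
    fin_cases i
    · exact hu0'
    · exact hu1'
  · have hapos : 0 < a ^ (m-1) := hneven.pow_pos ha0
    have hbn : b ^ (m-1) = a ^ (m-1) := by rw [hba, hneven.neg_pow]
    have hs : ∀ i, 0 ≤ x i + y i := by
      intro i
      have h := huF i
      rw [hFu i, hbn] at h
      simp only [Pi.zero_apply, add_zero] at h
      by_contra h'
      push_neg at h'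
      nlinarith
    have hz0 : u 0 * ((x 0 + y 0) * a ^ (m-1)) = 0 ∧
        u 1 * ((x 1 + y 1) * a ^ (m-1)) = 0 := by
      have t0 : 0 ≤ u 0 * ((x 0 + y 0) * a ^ (m-1)) :=
        mul_nonneg (hu0 0) (mul_nonneg (hs 0) hapos.le)
      have t1 : 0 ≤ u 1 * ((x 1 + y 1) * a ^ (m-1)) :=
        mul_nonneg (hu0 1) (mul_nonneg (hs 1) hapos.le)
      have hsum'' : u 0 * ((x 0 + y 0) * a ^ (m-1)) +
          u 1 * ((x 1 + y 1) * a ^ (m-1)) = 0 := by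
        rw [← hsum']
        rw [hbn]
        ring
      constructor <;> linarith
    have hcomp : ∀ i, 0 < u i → x i + y i = 0 := by
      intro i hui
      have h : u i * ((x i + y i) * a ^ (m-1)) = 0 := by
        fin_cases i
        · exact hz0.1
        · exact hz0.2
      rcases mul_eq_zero.mp h with h | h
      · exact absurd h (ne_of_gt hui)
      · rcases mul_eq_zero.mp h with h | h
        · exact h
        · exact absurd h (ne_of_gt hapos)
    have hU : u 0 ≠ 0 ∨ u 1 ≠ 0 := by
      by_contra h
      push_neg at h
      exact hne (funext fun i => by fin_cases i <;> simp [h.1, h.2])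
    rcases hU with h0 | h1
    · have hu0pos : 0 < u 0 := lt_of_le_of_ne (hu0 0) (Ne.symm h0)
      have hxy0 : x 0 + y 0 = 0 := hcomp 0 hu0pos
      have hy0 : y 0 = -(x 0) := by linarith
      by_cases hu1 : u 1 = 0
      · have hx0ne : x 0 ≠ 0 := by
          intro h
          exact ha0 (by rw [ha2, h, hu1]; ring)
        rcases hx0ne.lt_or_gt with hneg | hpos
        · -- x 0 < 0
          obtain ⟨v, hv0, hvF, hvs⟩ := hQ ![x 0, |y 1| + |x 1| + 1]
          obtain ⟨A, hA⟩ : ∃ A, A = x 0 * v 0 + x 1 * v 1 := ⟨_, rfl⟩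
          obtain ⟨B, hB⟩ : ∃ B, B = y 0 * v 0 + y 1 * v 1 := ⟨_, rfl⟩
          have hFv : ∀ i, act2 m 1 1 x y v i = x i * A ^ (m-1) + y i * B ^ (m-1) := by
            intro i
            simp only [act2, Fin.sum_univ_two, one_mul]
            rw [← hA, ← hB]
          have hF0 := hvF 0
          have hF1 := hvF 1
          rw [hFv 0] at hF0
          rw [hFv 1] at hF1
          simp only [Matrix.cons_val_zero, Matrix.cons_val_one, Matrix.head_cons] at hF0 hF1
          rw [Fin.sum_univ_two, hFv 0, hFv 1] at hvs
          simp only [Matrix.cons_val_zero, Matrix.cons_val_one, Matrix.head_cons] at hvs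
          rw [hy0] at hF0 hvs
          refine noSolution (m-1) hneven (-(x 0)) (y 1) (x 1) (v 0) (v 1) B A
            (by linarith) (by linarith [hs 1]) (hv0 0) (hv0 1) ?_ ?_ ?_ ?_ ?_
          · rw [hB, hy0]; try ring
          · rw [hA]; try ring
          · linarith
          · linarith
          · linear_combination hvs
        · -- 0 < x 0
          obtain ⟨v, hv0, hvF, hvs⟩ := hQ ![-(x 0), |x 1| + |y 1| + 1]
          obtain ⟨A, hA⟩ : ∃ A, A = x 0 * v 0 + x 1 * v 1 := ⟨_, rfl⟩
          obtain ⟨B, hB⟩ : ∃ B, B = y 0 * v 0 + y 1 * v 1 := ⟨_, rfl⟩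
          have hFv : ∀ i, act2 m 1 1 x y v i = x i * A ^ (m-1) + y i * B ^ (m-1) := by
            intro i
            simp only [act2, Fin.sum_univ_two, one_mul]
            rw [← hA, ← hB]
          have hF0 := hvF 0
          have hF1 := hvF 1
          rw [hFv 0] at hF0
          rw [hFv 1] at hF1
          simp only [Matrix.cons_val_zero, Matrix.cons_val_one, Matrix.head_cons] at hF0 hF1
          rw [Fin.sum_univ_two, hFv 0, hFv 1] at hvs
          simp only [Matrix.cons_val_zero, Matrix.cons_val_one, Matrix.head_cons] at hvs
          rw [hy0] at hF0 hvs
          refine noSolution (m-1) hneven (x 0) (x 1) (y 1) (v 0) (v 1) A B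
            (by linarith) (by linarith [hs 1]) (hv0 0) (hv0 1) ?_ ?_ ?_ ?_ ?_
          · rw [hA]; try ring
          · rw [hB, hy0]; try ring
          · linarith
          · linarith
          · linear_combination hvs
      · have hu1pos : 0 < u 1 := lt_of_le_of_ne (hu0 1) (Ne.symm hu1)
        exact hdet (by linear_combination x 0 * (hcomp 1 hu1pos) - x 1 * hxy0)
    · have hu1pos : 0 < u 1 := lt_of_le_of_ne (hu0 1) (Ne.symm h1)
      have hxy1 : x 1 + y 1 = 0 := hcomp 1 hu1pos
      have hy1 : y 1 = -(x 1) := by linarith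
      by_cases hu0' : u 0 = 0
      · have hx1ne : x 1 ≠ 0 := by
          intro h
          exact ha0 (by rw [ha2, h, hu0']; ring)
        rcases hx1ne.lt_or_gt with hneg | hpos
        · -- x 1 < 0
          obtain ⟨v, hv0, hvF, hvs⟩ := hQ ![|y 0| + |x 0| + 1, x 1]
          obtain ⟨A, hA⟩ : ∃ A, A = x 0 * v 0 + x 1 * v 1 := ⟨_, rfl⟩
          obtain ⟨B, hB⟩ : ∃ B, B = y 0 * v 0 + y 1 * v 1 := ⟨_, rfl⟩
          have hFv : ∀ i, act2 m 1 1 x y v i = x i * A ^ (m-1) + y i * B ^ (m-1) := by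
            intro i
            simp only [act2, Fin.sum_univ_two, one_mul]
            rw [← hA, ← hB]
          have hF0 := hvF 0
          have hF1 := hvF 1
          rw [hFv 0] at hF0
          rw [hFv 1] at hF1
          simp only [Matrix.cons_val_zero, Matrix.cons_val_one, Matrix.head_cons] at hF0 hF1
          rw [Fin.sum_univ_two, hFv 0, hFv 1] at hvs
          simp only [Matrix.cons_val_zero, Matrix.cons_val_one, Matrix.head_cons] at hvs
          rw [hy1] at hF1 hvs
          refine noSolution (m-1) hneven (-(x 1)) (y 0) (x 0) (v 1) (v 0) B A
            (by linarith) (by linarith [hs 0]) (hv0 1) (hv0 0) ?_ ?_ ?_ ?_ ?_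
          · rw [hB, hy1]; try ring
          · rw [hA]; try ring
          · linarith
          · linarith
          · linear_combination hvs
        · -- 0 < x 1
          obtain ⟨v, hv0, hvF, hvs⟩ := hQ ![|x 0| + |y 0| + 1, -(x 1)]
          obtain ⟨A, hA⟩ : ∃ A, A = x 0 * v 0 + x 1 * v 1 := ⟨_, rfl⟩
          obtain ⟨B, hB⟩ : ∃ B, B = y 0 * v 0 + y 1 * v 1 := ⟨_, rfl⟩
          have hFv : ∀ i, act2 m 1 1 x y v i = x i * A ^ (m-1) + y i * B ^ (m-1) := by
            intro i
            simp only [act2, Fin.sum_univ_two, one_mul]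
            rw [← hA, ← hB]
          have hF0 := hvF 0
          have hF1 := hvF 1
          rw [hFv 0] at hF0
          rw [hFv 1] at hF1
          simp only [Matrix.cons_val_zero, Matrix.cons_val_one, Matrix.head_cons] at hF0 hF1
          rw [Fin.sum_univ_two, hFv 0, hFv 1] at hvs
          simp only [Matrix.cons_val_zero, Matrix.cons_val_one, Matrix.head_cons] at hvs
          rw [hy1] at hF1 hvs
          refine noSolution (m-1) hneven (x 1) (x 0) (y 0) (v 1) (v 0) A B
            (by linarith) (by linarith [hs 0]) (hv0 1) (hv0 0) ?_ ?_ ?_ ?_ ?_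
          · rw [hA]; try ring
          · rw [hB, hy1]; try ring
          · linarith
          · linarith
          · linear_combination hvs
      · have hu0pos : 0 < u 0 := lt_of_le_of_ne (hu0 0) (Ne.symm hu0')
        exact hdet (by linear_combination x 0 * hxy1 - x 1 * (hcomp 0 hu0pos))
end

section
/- Let m ≥ 2 be even, and x, y ∈ ℝ² linearly independent with A = x^{⊗m} − y^{⊗m}, so (A u^{m-1})_i = x_i(xᵀu)^{m-1} − y_i(yᵀu)^{m-1}. If A is not an R₀-tensor, then there exists α ∈ {1, −1} such that either (y₁ = α x₁ and x₁(x₂ − α y₂) > 0) or (y₂ = α x₂ and x₂(x₁ − α y₁) > 0). -/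
/-- If `u ≠ 0`, `u ⊥ x`, `u ⊥ y` in `ℝ²`, then `x, y` are dependent. -/
lemma orth_dep (x y u : Fin 2 → ℝ)
    (hdep : ∀ a b : ℝ, a • x + b • y = 0 → a = 0 ∧ b = 0)
    (hS : x 0 * u 0 + x 1 * u 1 = 0) (hT : y 0 * u 0 + y 1 * u 1 = 0)
    (hu : u 0 ≠ 0 ∨ u 1 ≠ 0) : False := by
  rcases hu with hu | hu
  · have hc : (y 1) • x + (-(x 1)) • y = 0 := by
      funext i
      fin_cases i <;> simp only [Pi.add_apply, Pi.smul_apply, smul_eq_mul, Pi.zero_apply]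
      · show y 1 * x 0 + -(x 1) * y 0 = 0
        have h : u 0 * (y 1 * x 0 + -(x 1) * y 0) = 0 := by linear_combination y 1 * hS - x 1 * hT
        rcases mul_eq_zero.mp h with h | h
        · exact absurd h hu
        · linarith
      · show y 1 * x 1 + -(x 1) * y 1 = 0
        ring
    obtain ⟨hy1, hx1⟩ := hdep _ _ hc
    have hx1' : x 1 = 0 := by linarith
    have hx0 : x 0 = 0 := by
      have : x 0 * u 0 = 0 := by rw [hx1'] at hS; linarith
      rcases mul_eq_zero.mp this with h | h
      · exact h
      · exact absurd h hu
    have hc2 : (1 : ℝ) • x + (0 : ℝ) • y = 0 := by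
      funext i
      fin_cases i <;> simp [hx0, hx1']
    exact one_ne_zero (hdep 1 0 hc2).1
  · have hc : (y 0) • x + (-(x 0)) • y = 0 := by
      funext i
      fin_cases i <;> simp only [Pi.add_apply, Pi.smul_apply, smul_eq_mul, Pi.zero_apply]
      · show y 0 * x 0 + -(x 0) * y 0 = 0
        ring
      · show y 0 * x 1 + -(x 0) * y 1 = 0
        have h : u 1 * (y 0 * x 1 + -(x 0) * y 1) = 0 := by linear_combination y 0 * hS - x 0 * hT
        rcases mul_eq_zero.mp h with h | h
        · exact absurd h hu
        · linarith
    obtain ⟨hy0, hx0⟩ := hdep _ _ hc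
    have hx0' : x 0 = 0 := by linarith
    have hx1 : x 1 = 0 := by
      have : x 1 * u 1 = 0 := by rw [hx0'] at hS; linarith
      rcases mul_eq_zero.mp this with h | h
      · exact h
      · exact absurd h hu
    have hc2 : (1 : ℝ) • x + (0 : ℝ) • y = 0 := by
      funext i
      fin_cases i <;> simp [hx0', hx1]
    exact one_ne_zero (hdep 1 0 hc2).1

/-- scalar key lemma for one coordinate. -/
lemma key (m : ℕ) (α x0 x1 y0 y1 u0 u1 s : ℝ)
    (hodd : Odd (m-1)) (hα : α = 1 ∨ α = -1)
    (hs : s = x0*u0 + x1*u1)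
    (hsne : s ≠ 0)
    (h1 : 0 ≤ (x1 - α*y1) * s^(m-1))
    (hu0 : 0 < u0)
    (ht : y0*u0 + y1*u1 = α * s)
    (hterm0 : u0 * ((x0 - α*y0) * s^(m-1)) = 0)
    (hnd : y0 = α*x0 → y1 = α*x1 → False) :
    y0 = α*x0 ∧ 0 < x0*(x1 - α*y1) := by
  have hα2 : α * α = 1 := by rcases hα with h | h <;> rw [h] <;> norm_num
  have hsp : s^(m-1) ≠ 0 := pow_ne_zero _ hsne
  have hx0 : x0 - α*y0 = 0 := by
    rcases mul_eq_zero.mp hterm0 with h | h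
    · exact absurd h hu0.ne'
    · exact (mul_eq_zero.mp h).resolve_right hsp
  have hy0 : y0 = α*x0 := by linear_combination -α * hx0 - y0 * hα2
  refine ⟨hy0, ?_⟩
  have hne1 : x1 - α*y1 ≠ 0 := by
    intro h
    exact hnd hy0 (by linear_combination -α * h - y1 * hα2)
  have hu1z : u1 * (y1 - α*x1) = 0 := by
    rw [hy0, hs] at ht; linear_combination ht
  rcases mul_eq_zero.mp hu1z with hu1 | hy1
  · -- u1 = 0
    have hsx : s = x0 * u0 := by rw [hs, hu1]; ring
    have hx0ne : x0 ≠ 0 := by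
      intro h; apply hsne; rw [hsx, h]; ring
    rcases hx0ne.lt_or_gt with hneg | hpos
    · have hsneg : s < 0 := by rw [hsx]; exact mul_neg_of_neg_of_pos hneg hu0
      have hpow : s^(m-1) < 0 := Odd.pow_neg hodd hsneg
      have : x1 - α*y1 ≤ 0 := by nlinarith
      have : x1 - α*y1 < 0 := lt_of_le_of_ne this hne1
      exact mul_pos_of_neg_of_neg hneg this
    · have hspos : s > 0 := by rw [hsx]; exact mul_pos hpos hu0
      have hpow : s^(m-1) > 0 := pow_pos hspos _
      have : 0 ≤ x1 - α*y1 := by nlinarith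
      have : 0 < x1 - α*y1 := lt_of_le_of_ne this (Ne.symm hne1)
      exact mul_pos hpos this
  · exact absurd (by linarith) (hnd hy0)

/-- For even `m ≥ 2` and linearly independent `x, y`, if `A = x^{⊗m} - y^{⊗m}` is
not an R₀-tensor, then for some `α = ±1`, either `y₁ = α x₁` and
`x₁ (x₂ - α y₂) > 0`, or `y₂ = α x₂` and `x₂ (x₁ - α y₁) > 0`. -/
theorem even_not_R0_structure (m : ℕ) (hm : 2 ≤ m) (heven : Even m)
    (x y : Fin 2 → ℝ) (hxy : LinearIndependent ℝ ![x, y])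
    (hnotR0 : ¬ (∀ u : Fin 2 → ℝ,
      (∀ i, 0 ≤ u i) →
      (∀ i, 0 ≤ act2 m 1 (-1) x y u i) →
      (∑ i, u i * act2 m 1 (-1) x y u i) = 0 →
      u = 0)) :
    ∃ α : ℝ, (α = 1 ∨ α = -1) ∧
      ((y 0 = α * x 0 ∧ 0 < x 0 * (x 1 - α * y 1)) ∨
       (y 1 = α * x 1 ∧ 0 < x 1 * (x 0 - α * y 0))) := by
  have hdep : ∀ a b : ℝ, a • x + b • y = 0 → a = 0 ∧ b = 0 :=
    LinearIndependent.pair_iff.mp hxy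
  have hodd : Odd (m - 1) := Nat.Even.sub_odd (by omega) heven odd_one
  push_neg at hnotR0
  obtain ⟨u, hge, hA, hsum, hune⟩ := hnotR0
  have hA0 := hA 0
  have hA1 := hA 1
  simp only [act2, Fin.sum_univ_two, one_mul, neg_mul, neg_one_mul] at hA0 hA1 hsum
  set S := x 0 * u 0 + x 1 * u 1 with hSdef
  set T := y 0 * u 0 + y 1 * u 1 with hTdef
  have huor : u 0 ≠ 0 ∨ u 1 ≠ 0 := by
    by_contra h
    push_neg at h
    exact hune (funext fun i => by fin_cases i <;> simp [h.1, h.2])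
  -- S^m = T^m
  have hpowS : S * S^(m-1) = S^m := by
    rw [mul_comm, ← pow_succ]; congr 1; omega
  have hpowT : T * T^(m-1) = T^m := by
    rw [mul_comm, ← pow_succ]; congr 1; omega
  have hSm : S^m = T^m := by
    rw [← hpowS, ← hpowT]; linear_combination hsum
  have habs : |S| = |T| := by
    refine (pow_left_inj₀ (abs_nonneg S) (abs_nonneg T) (show m ≠ 0 by omega)).mp ?_
    rw [heven.pow_abs, heven.pow_abs]; exact hSm
  by_cases hS0 : S = 0
  · exfalso
    have hT0 : T = 0 := by
      have := habs; rw [hS0, abs_zero] at this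
      exact abs_eq_zero.mp this.symm
    exact orth_dep x y u hdep hS0 hT0 huor
  -- T = α * S for α = ±1
  obtain ⟨α, hα, hT⟩ : ∃ α : ℝ, (α = 1 ∨ α = -1) ∧ T = α * S := by
    rcases abs_eq_abs.mp habs with h | h
    · exact ⟨1, Or.inl rfl, by linarith⟩
    · exact ⟨-1, Or.inr rfl, by linarith⟩
  have hαpow : α^(m-1) = α := by
    rcases hα with h | h <;> rw [h]
    · exact one_pow _
    · exact Odd.neg_one_pow hodd
  have hTpow : T^(m-1) = α * S^(m-1) := by
    rw [hT, mul_pow, hαpow]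
  rw [hTpow] at hA0 hA1 hsum
  have hA0' : 0 ≤ (x 0 - α * y 0) * S^(m-1) := by nlinarith [hA0]
  have hA1' : 0 ≤ (x 1 - α * y 1) * S^(m-1) := by nlinarith [hA1]
  have hterm : u 0 * ((x 0 - α * y 0) * S^(m-1)) + u 1 * ((x 1 - α * y 1) * S^(m-1)) = 0 := by
    linear_combination hsum
  have hterm0 : u 0 * ((x 0 - α * y 0) * S^(m-1)) = 0 := by
    nlinarith [mul_nonneg (hge 0) hA0', mul_nonneg (hge 1) hA1']
  have hterm1 : u 1 * ((x 1 - α * y 1) * S^(m-1)) = 0 := by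
    nlinarith [mul_nonneg (hge 0) hA0', mul_nonneg (hge 1) hA1']
  have hnd : ¬ (y 0 = α * x 0 ∧ y 1 = α * x 1) := by
    rintro ⟨h0, h1⟩
    have hc : α • x + (-1 : ℝ) • y = 0 := by
      funext i
      fin_cases i <;> simp only [Pi.add_apply, Pi.smul_apply, smul_eq_mul, Pi.zero_apply]
      · show α * x 0 + -1 * y 0 = 0
        rw [h0]; ring
      · show α * x 1 + -1 * y 1 = 0
        rw [h1]; ring
    have := (hdep α (-1) hc).1
    rcases hα with h | h <;> rw [h] at this <;> norm_num at this
  refine ⟨α, hα, ?_⟩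
  rcases huor with hu | hu
  · have hu0 : 0 < u 0 := lt_of_le_of_ne (hge 0) (Ne.symm hu)
    exact Or.inl (key m α (x 0) (x 1) (y 0) (y 1) (u 0) (u 1) S hodd hα hSdef hS0 hA1' hu0
      (by rw [← hT]) hterm0 (fun a b => hnd ⟨a, b⟩))
  · have hu1 : 0 < u 1 := lt_of_le_of_ne (hge 1) (Ne.symm hu)
    exact Or.inr (key m α (x 1) (x 0) (y 1) (y 0) (u 1) (u 0) S hodd hα (by rw [hSdef]; ring)
      hS0 hA0' hu1 (by rw [← hT]; ring) hterm1 (fun a b => hnd ⟨b, a⟩))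
end

section
/- Let m ≥ 2 be even and x, y ∈ ℝ² with y₁ = α x₁ for some α ∈ {1, −1}, x₁(x₂ − α y₂) > 0, and |x₂| ≥ |y₂|. Then the tensor A = x^{⊗m} − y^{⊗m} is nonnegative (all entries ≥ 0) and its entry a_{11…1} = x₁^m − y₁^m equals 0; consequently A is not a Q-tensor. -/
/-- Key entrywise nonnegativity lemma. -/
lemma key_entry (x y : Fin 2 → ℝ) (α : ℝ) (hα : α = 1 ∨ α = -1)
    (h1 : y 0 = α * x 0) (h2 : 0 < x 0 * (x 1 - α * y 1)) (h3 : |y 1| ≤ |x 1|)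
    (p q : ℕ) (hpq : Even (p + q)) :
    0 ≤ x 0 ^ p * x 1 ^ q - y 0 ^ p * y 1 ^ q := by
  have hα2 : α * α = 1 := by rcases hα with rfl | rfl <;> norm_num
  rcases Nat.even_or_odd p with hp | hp
  · have hq : Even q := (Nat.even_add.mp hpq).mp hp
    have hap : α ^ p = 1 := by rcases hα with rfl | rfl; · simp
                               · exact hp.neg_one_pow
    have h0 : 0 ≤ x 0 ^ p := hp.pow_nonneg _
    have hbc : y 1 ^ q ≤ x 1 ^ q := by
      calc y 1 ^ q = |y 1| ^ q := (hq.pow_abs _).symm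
        _ ≤ |x 1| ^ q := pow_le_pow_left₀ (abs_nonneg _) h3 q
        _ = x 1 ^ q := hq.pow_abs _
    have : y 0 ^ p = x 0 ^ p := by rw [h1, mul_pow, hap, one_mul]
    rw [this]
    nlinarith [mul_nonneg h0 (sub_nonneg.mpr hbc)]
  · have hq : Odd q := by
      rcases Nat.even_or_odd q with h | h
      · exact absurd ((Nat.even_add.mp hpq).mpr h) (by simpa using hp)
      · exact h
    have hap : α ^ p = α := by rcases hα with rfl | rfl; · simp
                               · exact hp.neg_one_pow
    have haq : α ^ q = α := by rcases hα with rfl | rfl; · simp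
                               · exact hq.neg_one_pow
    have hy0 : y 0 ^ p = α * x 0 ^ p := by rw [h1, mul_pow, hap]
    have hyq : α * y 1 ^ q = (α * y 1) ^ q := by rw [mul_pow, haq]
    rw [hy0]
    rcases mul_pos_iff.mp h2 with ⟨ha, hb⟩ | ⟨ha, hb⟩
    · have h1' : x 0 ^ p > 0 := pow_pos ha p
      have h2' : (α * y 1) ^ q < x 1 ^ q := hq.strictMono_pow (by linarith)
      nlinarith [mul_pos h1' (sub_pos.mpr h2')]
    · have h1' : x 0 ^ p < 0 := hp.pow_neg ha
      have h2' : x 1 ^ q < (α * y 1) ^ q := hq.strictMono_pow (by linarith)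
      nlinarith [mul_pos_of_neg_of_neg h1' (sub_neg.mpr h2')]

/-- For even `m`, `y₁ = α x₁` with `α = ±1`, `x₁ (x₂ - α y₂) > 0` and `|x₂| ≥ |y₂|`:
the tensor `A = x^{⊗m} - y^{⊗m}` is nonnegative, its `(1,…,1)` entry vanishes, and
`A` is not a Q-tensor. -/
theorem even_nonneg_case_not_Q (m : ℕ) (hm : 2 ≤ m) (heven : Even m)
    (x y : Fin 2 → ℝ) (α : ℝ) (hα : α = 1 ∨ α = -1)
    (h1 : y 0 = α * x 0) (h2 : 0 < x 0 * (x 1 - α * y 1)) (h3 : |y 1| ≤ |x 1|) :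
    (∀ idx : Fin m → Fin 2, 0 ≤ (∏ k, x (idx k)) - ∏ k, y (idx k)) ∧
    (x 0 ^ m - y 0 ^ m = 0) ∧
    ¬ (∀ q : Fin 2 → ℝ, ∃ u, tcpSol2 (act2 m 1 (-1) x y) q u) := by
  classical
  have key := key_entry x y α hα h1 h2 h3
  have hdiag : x 0 ^ m - y 0 ^ m = 0 := by
    rcases hα with rfl | rfl
    · rw [h1, one_mul, sub_self]
    · rw [h1, mul_pow, heven.neg_one_pow, one_mul, sub_self]
  refine ⟨?_, hdiag, ?_⟩
  · intro idx
    set p := (Finset.univ.filter (fun k => idx k = 0)).card with hpdef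
    have hple : p ≤ m := by
      simpa using (Finset.card_filter_le Finset.univ (fun k => idx k = 0))
    have hcard : (Finset.univ.filter (fun k => ¬ idx k = 0)).card = m - p := by
      have := Finset.card_filter_add_card_filter_not
        (s := (Finset.univ : Finset (Fin m))) (p := fun k => idx k = 0)
      simp only [Finset.card_univ, Fintype.card_fin] at this
      omega
    have hone : ∀ j : Fin 2, ¬ j = 0 → j = 1 := by decide
    have hsplit : ∀ z : Fin 2 → ℝ, (∏ k, z (idx k)) = z 0 ^ p * z 1 ^ (m - p) := by
      intro z
      rw [← Finset.prod_filter_mul_prod_filter_not Finset.univ (fun k => idx k = 0)]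
      congr 1
      · calc (∏ k ∈ Finset.univ.filter (fun k => idx k = 0), z (idx k))
            = ∏ _k ∈ Finset.univ.filter (fun k => idx k = 0), z 0 :=
              Finset.prod_congr rfl (fun k hk => by rw [(Finset.mem_filter.mp hk).2])
          _ = z 0 ^ p := by rw [Finset.prod_const]
      · calc (∏ k ∈ Finset.univ.filter (fun k => ¬ idx k = 0), z (idx k))
            = ∏ _k ∈ Finset.univ.filter (fun k => ¬ idx k = 0), z 1 :=
              Finset.prod_congr rfl (fun k hk => by rw [hone _ (Finset.mem_filter.mp hk).2])
          _ = z 1 ^ (m - p) := by rw [Finset.prod_const, hcard]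
    rw [hsplit x, hsplit y]
    exact key p (m - p) (by rw [show p + (m - p) = m by omega]; exact heven)
  · intro hQ
    obtain ⟨n, rfl⟩ : ∃ n, m = n + 1 := ⟨m - 1, by omega⟩
    have hn1 : n + 1 - 1 = n := rfl
    obtain ⟨u, hu, hF, hsum⟩ := hQ (fun i => if i = 0 then (-1 : ℝ) else 1)
    -- F u 1 is nonnegative
    have hF1 : 0 ≤ x 1 * (∑ j, x j * u j) ^ n - y 1 * (∑ j, y j * u j) ^ n := by
      have hs : (∑ j, x j * u j) = x 0 * u 0 + x 1 * u 1 := by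
        rw [Fin.sum_univ_two]
      have ht : (∑ j, y j * u j) = y 0 * u 0 + y 1 * u 1 := by
        rw [Fin.sum_univ_two]
      have expand : x 1 * (∑ j, x j * u j) ^ n - y 1 * (∑ j, y j * u j) ^ n =
          ∑ k ∈ Finset.range (n + 1),
            ((n.choose k : ℝ) * (u 0 ^ k * u 1 ^ (n - k))) *
              (x 0 ^ k * x 1 ^ (n - k + 1) - y 0 ^ k * y 1 ^ (n - k + 1)) := by
        rw [hs, ht, add_pow, add_pow, Finset.mul_sum, Finset.mul_sum,
          ← Finset.sum_sub_distrib]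
        refine Finset.sum_congr rfl fun k hk => ?_
        rw [mul_pow, mul_pow, mul_pow, mul_pow, pow_succ, pow_succ]
        ring
      rw [expand]
      apply Finset.sum_nonneg
      intro k hk
      have hk' := Finset.mem_range.mp hk
      apply mul_nonneg
      · exact mul_nonneg (Nat.cast_nonneg _)
          (mul_nonneg (pow_nonneg (hu 0) _) (pow_nonneg (hu 1) _))
      · exact key k (n - k + 1)
          (by rw [show k + (n - k + 1) = n + 1 by omega]; exact heven)
    have hq1 : (fun i => if i = (0 : Fin 2) then (-1 : ℝ) else 1) 1 = 1 := by norm_num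
    have hq0 : (fun i => if i = (0 : Fin 2) then (-1 : ℝ) else 1) 0 = -1 := by norm_num
    have hFu1 : act2 (n + 1) 1 (-1) x y u 1 =
        x 1 * (∑ j, x j * u j) ^ n - y 1 * (∑ j, y j * u j) ^ n := by
      simp only [act2, hn1]; ring
    -- complementarity forces u 1 = 0
    have hterm0 : 0 ≤ u 0 * (act2 (n + 1) 1 (-1) x y u 0 +
        (fun i => if i = (0 : Fin 2) then (-1 : ℝ) else 1) 0) :=
      mul_nonneg (hu 0) (hF 0)
    have hterm1 : 0 ≤ u 1 * (act2 (n + 1) 1 (-1) x y u 1 +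
        (fun i => if i = (0 : Fin 2) then (-1 : ℝ) else 1) 1) :=
      mul_nonneg (hu 1) (hF 1)
    rw [Fin.sum_univ_two] at hsum
    have hzero1 : u 1 * (act2 (n + 1) 1 (-1) x y u 1 +
        (fun i => if i = (0 : Fin 2) then (-1 : ℝ) else 1) 1) = 0 := by linarith
    have hu1 : u 1 = 0 := by
      rcases mul_eq_zero.mp hzero1 with h | h
      · exact h
      · exfalso; rw [hFu1, hq1] at h; linarith
    -- now F u 0 = 0, contradicting (F u + q) 0 ≥ 0
    have hF0 : act2 (n + 1) 1 (-1) x y u 0 = 0 := by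
      have hs : (∑ j, x j * u j) = x 0 * u 0 := by
        rw [Fin.sum_univ_two, hu1]; ring
      have ht : (∑ j, y j * u j) = y 0 * u 0 := by
        rw [Fin.sum_univ_two, hu1]; ring
      have : act2 (n + 1) 1 (-1) x y u 0 =
          (x 0 ^ (n + 1) - y 0 ^ (n + 1)) * u 0 ^ n := by
        simp only [act2, hn1, hs, ht, mul_pow]; ring
      rw [this, hdiag, zero_mul]
    have := hF 0
    rw [hF0, hq0] at this
    linarith
end

section
/- Let m ≥ 2 be even and A ∈ S(m,2) with A = x^{⊗m} − y^{⊗m} for linearly independent x, y ∈ ℝ². If A is a Q-tensor, then A is an R₀-tensor. -/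
lemma pow_red (a : ℝ) {m : ℕ} (hm : 1 ≤ m) : a ^ m = a * a ^ (m - 1) := by
  conv_lhs => rw [← Nat.sub_add_cancel hm]
  rw [pow_succ']

lemma sum2 (k j : Fin 2) (hkj : k ≠ j) (f : Fin 2 → ℝ) :
    ∑ i, f i = f k + f j := by
  fin_cases k <;> fin_cases j <;> simp_all [Fin.sum_univ_two] <;> ring

lemma comp2 (u g : Fin 2 → ℝ) (h0 : ∀ i, 0 ≤ u i) (h1 : ∀ i, 0 ≤ g i)
    (hs : ∑ i, u i * g i = 0) : ∀ i, u i * g i = 0 := by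
  rw [Fin.sum_univ_two] at hs
  have h00 := mul_nonneg (h0 0) (h1 0)
  have h11 := mul_nonneg (h0 1) (h1 1)
  have g0 : u 0 * g 0 = 0 := by linarith
  have g1 : u 1 * g 1 = 0 := by linarith
  intro i; fin_cases i
  · simpa using g0
  · simpa using g1

lemma det_ne (x y : Fin 2 → ℝ) (h : LinearIndependent ℝ ![x, y]) :
    x 0 * y 1 - x 1 * y 0 ≠ 0 := by
  intro hD
  rw [LinearIndependent.pair_iff] at h
  have e1 : (y 1) • x + (-(x 1)) • y = 0 := by
    have g0 : y 1 * x 0 + -(x 1) * y 0 = 0 := by linear_combination hD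
    have g1 : y 1 * x 1 + -(x 1) * y 1 = 0 := by ring
    funext i; fin_cases i
    · simpa using g0
    · simpa using g1
  have e0 : (y 0) • x + (-(x 0)) • y = 0 := by
    have g0 : y 0 * x 0 + -(x 0) * y 0 = 0 := by ring
    have g1 : y 0 * x 1 + -(x 0) * y 1 = 0 := by linear_combination -hD
    funext i; fin_cases i
    · simpa using g0
    · simpa using g1
  obtain ⟨hy1, hx1⟩ := h _ _ e1
  obtain ⟨hy0, hx0⟩ := h _ _ e0
  have e : (1:ℝ) • x + (0:ℝ) • y = 0 := by
    have g0 : (1:ℝ) * x 0 + 0 * y 0 = 0 := by nlinarith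
    have g1 : (1:ℝ) * x 1 + 0 * y 1 = 0 := by nlinarith
    funext i; fin_cases i
    · simpa using g0
    · simpa using g1
  exact one_ne_zero (h _ _ e).1

lemma act2_negy (m : ℕ) (hn : Odd (m - 1)) (x y : Fin 2 → ℝ) :
    act2 m 1 (-1) x (-y) = act2 m 1 (-1) x y := by
  funext u i
  have h1 : (∑ l, -y l * u l) = -(∑ l, y l * u l) := by
    rw [Fin.sum_univ_two, Fin.sum_univ_two]; ring
  simp only [act2, Pi.neg_apply, h1, hn.neg_pow]
  ring

lemma act2_negneg (m : ℕ) (hn : Odd (m - 1)) (x y : Fin 2 → ℝ) :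
    act2 m 1 (-1) (-x) (-y) = act2 m 1 (-1) x y := by
  funext u i
  have h1 : (∑ l, -y l * u l) = -(∑ l, y l * u l) := by
    rw [Fin.sum_univ_two, Fin.sum_univ_two]; ring
  have h2 : (∑ l, -x l * u l) = -(∑ l, x l * u l) := by
    rw [Fin.sum_univ_two, Fin.sum_univ_two]; ring
  simp only [act2, Pi.neg_apply, h1, h2, hn.neg_pow]
  ring

/-- Core nonexistence lemma: in the reduced configuration, some `q` admits no solution. -/
lemma L1 (m : ℕ) (hm : 2 ≤ m) (heven : Even m) (k j : Fin 2) (hkj : k ≠ j)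
    (x y : Fin 2 → ℝ) (hck : x k = y k) (hc : 0 < x k) (hde : y j < x j) :
    ∃ q, ∀ v, ¬ tcpSol2 (act2 m 1 (-1) x y) q v := by
  have hn : Odd (m - 1) := Nat.Even.sub_odd (by omega) heven odd_one
  have hm' : (m - 1) + 1 = m := by omega
  have hmono : ∀ {s t : ℝ}, s ≤ t → s ^ (m - 1) ≤ t ^ (m - 1) :=
    fun h => (Odd.strictMono_pow (R := ℝ) hn).monotone h
  have hrev : ∀ {s t : ℝ}, s ^ (m - 1) < t ^ (m - 1) → s < t :=
    fun h => (Odd.strictMono_pow (R := ℝ) hn).lt_iff_lt.1 h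
  rcases lt_trichotomy (x j ^ m) (y j ^ m) with hcase | hcase | hcase
  -- Case C : x j ^ m < y j ^ m, take q = (1 at k, -1 at j)
  · refine ⟨fun i => if i = k then 1 else -1, ?_⟩
    rintro v ⟨hv0, hfeas, hsum⟩
    have hcomp := comp2 v _ hv0 hfeas hsum
    have hA : (∑ i, x i * v i) = x k * v k + x j * v j := sum2 k j hkj _
    have hB : (∑ i, y i * v i) = y k * v k + y j * v j := sum2 k j hkj _
    have hact : ∀ i, act2 m 1 (-1) x y v i =
        x i * (∑ i, x i * v i) ^ (m - 1) - y i * (∑ i, y i * v i) ^ (m - 1) := by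
      intro i; simp only [act2]; ring
    have hAB : (∑ i, y i * v i) ≤ (∑ i, x i * v i) := by
      rw [hA, hB, hck]; nlinarith [hv0 j, sub_pos.2 hde]
    have hFk : 0 ≤ act2 m 1 (-1) x y v k := by
      rw [hact k, hck]; nlinarith [hmono hAB, hc]
    have hvk : v k = 0 := by
      rcases mul_eq_zero.1 (hcomp k) with h | h
      · exact h
      · exfalso; simp at h; linarith
    have hfj := hfeas j
    simp only [if_neg (Ne.symm hkj)] at hfj
    rw [hact j, hA, hB, hvk] at hfj
    simp only [mul_zero, zero_add] at hfj
    have e1 : x j * (x j * v j) ^ (m - 1) = x j ^ m * v j ^ (m - 1) := by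
      rw [mul_pow, pow_red (x j) (by omega : 1 ≤ m)]; ring
    have e2 : y j * (y j * v j) ^ (m - 1) = y j ^ m * v j ^ (m - 1) := by
      rw [mul_pow, pow_red (y j) (by omega : 1 ≤ m)]; ring
    have hvjn : 0 ≤ v j ^ (m - 1) := pow_nonneg (hv0 j) _
    rw [e1, e2] at hfj
    nlinarith [hfj, hvjn, hcase]
  -- Case B : x j ^ m = y j ^ m, so y j = -x j ; take q = (-1 at k, 1 at j)
  · have habs : |x j| = |y j| := by
      rcases lt_trichotomy |x j| |y j| with h | h | h
      · exfalso
        have := pow_lt_pow_left₀ h (abs_nonneg _) (by omega : m ≠ 0)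
        rw [Even.pow_abs heven, Even.pow_abs heven] at this; linarith
      · exact h
      · exfalso
        have := pow_lt_pow_left₀ h (abs_nonneg _) (by omega : m ≠ 0)
        rw [Even.pow_abs heven, Even.pow_abs heven] at this; linarith
    have hyj : y j = -x j := by
      rcases abs_eq_abs.1 habs with h | h
      · exact absurd h.symm hde.ne
      · linarith
    have hd : 0 < x j := by linarith [hde, hyj]
    refine ⟨fun i => if i = k then -1 else 1, ?_⟩
    rintro v ⟨hv0, hfeas, hsum⟩
    have hcomp := comp2 v _ hv0 hfeas hsum
    have hA : (∑ i, x i * v i) = x k * v k + x j * v j := sum2 k j hkj _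
    have hB : (∑ i, y i * v i) = y k * v k + y j * v j := sum2 k j hkj _
    have hact : ∀ i, act2 m 1 (-1) x y v i =
        x i * (∑ i, x i * v i) ^ (m - 1) - y i * (∑ i, y i * v i) ^ (m - 1) := by
      intro i; simp only [act2]; ring
    have hfk := hfeas k
    simp at hfk
    rw [hact k, hck] at hfk
    -- from hfk : 0 ≤ y k * A^(m-1) - y k * B^(m-1) + (-1)
    have hpow : (∑ i, y i * v i) ^ (m - 1) < (∑ i, x i * v i) ^ (m - 1) := by
      nlinarith [hfk, hc, hck]
    have hABlt : (∑ i, y i * v i) < (∑ i, x i * v i) := hrev hpow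
    have hvj : 0 < v j := by
      rcases (hv0 j).lt_or_eq with h | h
      · exact h
      · exfalso; rw [hA, hB, hck, ← h] at hABlt; linarith
    have hFj : act2 m 1 (-1) x y v j + 1 = 0 := by
      have := hcomp j
      simp only [if_neg (Ne.symm hkj)] at this
      rcases mul_eq_zero.1 this with h | h
      · exact absurd h hvj.ne'
      · exact h
    -- but F j ≥ 0
    have hsumAB : 0 ≤ (∑ i, x i * v i) + (∑ i, y i * v i) := by
      rw [hA, hB, hck, hyj]; nlinarith [hv0 k, hc]
    have hge : -(∑ i, y i * v i) ≤ (∑ i, x i * v i) := by linarith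
    have h1 : (-(∑ i, y i * v i)) ^ (m - 1) ≤ (∑ i, x i * v i) ^ (m - 1) := hmono hge
    rw [hn.neg_pow] at h1
    have : 0 ≤ act2 m 1 (-1) x y v j := by
      rw [hact j, hyj]; nlinarith [h1, hd]
    linarith
  -- Case A : y j ^ m < x j ^ m ; take q = (-1 at k, 0 at j)
  · have hd : 0 < x j := by
      by_contra hno
      push_neg at hno
      have h1 : |x j| < |y j| := by
        rw [abs_of_nonpos hno, abs_of_neg (lt_of_lt_of_le hde hno)]; linarith
      have := pow_lt_pow_left₀ h1 (abs_nonneg _) (by omega : m ≠ 0)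
      rw [Even.pow_abs heven, Even.pow_abs heven] at this; linarith
    refine ⟨fun i => if i = k then -1 else 0, ?_⟩
    rintro v ⟨hv0, hfeas, hsum⟩
    have hcomp := comp2 v _ hv0 hfeas hsum
    have hA : (∑ i, x i * v i) = x k * v k + x j * v j := sum2 k j hkj _
    have hB : (∑ i, y i * v i) = y k * v k + y j * v j := sum2 k j hkj _
    have hact : ∀ i, act2 m 1 (-1) x y v i =
        x i * (∑ i, x i * v i) ^ (m - 1) - y i * (∑ i, y i * v i) ^ (m - 1) := by
      intro i; simp only [act2]; ring
    have hfk := hfeas k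
    simp at hfk
    rw [hact k, hck] at hfk
    have hpow : (∑ i, y i * v i) ^ (m - 1) < (∑ i, x i * v i) ^ (m - 1) := by
      nlinarith [hfk, hc, hck]
    have hABlt : (∑ i, y i * v i) < (∑ i, x i * v i) := hrev hpow
    have hvj : 0 < v j := by
      rcases (hv0 j).lt_or_eq with h | h
      · exact h
      · exfalso; rw [hA, hB, hck, ← h] at hABlt; linarith
    have hFj : act2 m 1 (-1) x y v j = 0 := by
      have := hcomp j
      simp only [if_neg (Ne.symm hkj), add_zero] at this
      rcases mul_eq_zero.1 this with h | h
      · exact absurd h hvj.ne'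
      · exact h
    -- show F j > 0, contradiction
    have hFjpos : 0 < act2 m 1 (-1) x y v j := by
      rw [hact j]
      rcases le_or_gt 0 (y j) with he | he
      · -- B ≥ 0
        have hB0 : 0 ≤ (∑ i, y i * v i) := by
          rw [hB, ← hck]
          nlinarith [mul_nonneg hc.le (hv0 k), mul_nonneg he (hv0 j)]
        have hBn : 0 ≤ (∑ i, y i * v i) ^ (m - 1) := pow_nonneg hB0 _
        linarith [mul_pos hd (sub_pos.2 hpow), mul_nonneg (sub_pos.2 hde).le hBn]
      · -- y j < 0
        have ha1 : x j * v j ≤ (∑ i, x i * v i) := by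
          rw [hA]; nlinarith [hv0 k, hc]
        have hb1 : y j * v j ≤ (∑ i, y i * v i) := by
          rw [hB, ← hck]; nlinarith [hv0 k, hc]
        have hP := hmono ha1
        have hQ := hmono hb1
        have e1 : x j * (x j * v j) ^ (m - 1) = x j ^ m * v j ^ (m - 1) := by
          rw [mul_pow, pow_red (x j) (by omega : 1 ≤ m)]; ring
        have e2 : y j * (y j * v j) ^ (m - 1) = y j ^ m * v j ^ (m - 1) := by
          rw [mul_pow, pow_red (y j) (by omega : 1 ≤ m)]; ring
        have hvjn : 0 < v j ^ (m - 1) := pow_pos hvj _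
        linarith [mul_le_mul_of_nonneg_left hP hd.le,
          mul_le_mul_of_nonneg_left hQ (by linarith : (0:ℝ) ≤ -y j), e1, e2,
          mul_pos (sub_pos.2 hcase) hvjn]
    linarith

/-- Intermediate lemma handling the case `yᵀu = xᵀu ≠ 0`. -/
lemma L2 (m : ℕ) (hm : 2 ≤ m) (heven : Even m) (x y : Fin 2 → ℝ)
    (hdet : ∀ k j : Fin 2, k ≠ j → x k * y j - x j * y k ≠ 0)
    (hQ : ∀ q : Fin 2 → ℝ, ∃ u, tcpSol2 (act2 m 1 (-1) x y) q u)
    (u : Fin 2 → ℝ) (hsol : tcpSol2 (act2 m 1 (-1) x y) 0 u)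
    (k j : Fin 2) (hkj : k ≠ j) (hk : 0 < u k)
    (hba : (∑ i, y i * u i) = (∑ i, x i * u i))
    (ha : (∑ i, x i * u i) ≠ 0) : False := by
  have hn : Odd (m - 1) := Nat.Even.sub_odd (by omega) heven odd_one
  obtain ⟨hu0, hF0, hsum⟩ := hsol
  simp only [Pi.zero_apply, add_zero] at hF0 hsum
  have hcomp := comp2 u _ hu0 hF0 hsum
  have hact : ∀ i, act2 m 1 (-1) x y u i =
      x i * (∑ i, x i * u i) ^ (m - 1) - y i * (∑ i, y i * u i) ^ (m - 1) := by
    intro i; simp only [act2]; ring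
  have hAn : (∑ i, x i * u i) ^ (m - 1) ≠ 0 := pow_ne_zero _ ha
  have hFk : act2 m 1 (-1) x y u k = 0 := by
    rcases mul_eq_zero.1 (hcomp k) with h | h
    · exact absurd h hk.ne'
    · exact h
  have hck : x k = y k := by
    rw [hact k, hba] at hFk
    have : (x k - y k) * (∑ i, x i * u i) ^ (m - 1) = 0 := by linear_combination hFk
    rcases mul_eq_zero.1 this with h | h
    · linarith
    · exact absurd h hAn
  have hxjyj : x j ≠ y j := by
    intro hh; exact hdet k j hkj (by rw [hck, hh]; ring)
  have huj : u j = 0 := by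
    by_contra hne
    have hj : 0 < u j := (hu0 j).lt_of_ne (Ne.symm hne)
    have hFj : act2 m 1 (-1) x y u j = 0 := by
      rcases mul_eq_zero.1 (hcomp j) with h | h
      · exact absurd h hj.ne'
      · exact h
    rw [hact j, hba] at hFj
    have : (x j - y j) * (∑ i, x i * u i) ^ (m - 1) = 0 := by linear_combination hFj
    rcases mul_eq_zero.1 this with h | h
    · exact hxjyj (by linarith)
    · exact absurd h hAn
  have hAsum : (∑ i, x i * u i) = x k * u k + x j * u j := sum2 k j hkj _
  have hAeq : (∑ i, x i * u i) = x k * u k := by rw [hAsum, huj]; ring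
  have hxk0 : x k ≠ 0 := by
    intro h; exact ha (by rw [hAeq, h, zero_mul])
  have hFj0 : 0 ≤ (x j - y j) * (∑ i, x i * u i) ^ (m - 1) := by
    have h := hF0 j
    rw [hact j, hba] at h
    nlinarith [h]
  rcases hxk0.lt_or_gt with hneg | hpos
  · -- x k < 0 : use (-x, -y)
    have hA : (∑ i, x i * u i) < 0 := by
      rw [hAeq]; exact mul_neg_of_neg_of_pos hneg hk
    have hAnneg : (∑ i, x i * u i) ^ (m - 1) < 0 := hn.pow_neg hA
    have hje : x j < y j := by
      rcases lt_trichotomy (x j) (y j) with h | h | h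
      · exact h
      · exact absurd h hxjyj
      · exfalso; nlinarith [hFj0]
    obtain ⟨q, hq⟩ := L1 m hm heven k j hkj (-x) (-y)
      (by simp [hck]) (by simpa using by linarith : (0:ℝ) < (-x) k)
      (by simp only [Pi.neg_apply]; linarith)
    rw [act2_negneg m hn x y] at hq
    obtain ⟨v, hv⟩ := hQ q
    exact hq v hv
  · -- x k > 0 : apply L1 directly
    have hA : 0 < (∑ i, x i * u i) := by
      rw [hAeq]; exact mul_pos hpos hk
    have hAnpos : 0 < (∑ i, x i * u i) ^ (m - 1) := pow_pos hA _
    have hje : y j < x j := by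
      rcases lt_trichotomy (y j) (x j) with h | h | h
      · exact h
      · exact absurd h.symm hxjyj
      · exfalso; nlinarith [hFj0]
    obtain ⟨q, hq⟩ := L1 m hm heven k j hkj x y hck hpos hje
    obtain ⟨v, hv⟩ := hQ q
    exact hq v hv

/-- For even `m ≥ 2` and linearly independent `x, y`, if `A = x^{⊗m} - y^{⊗m}` is a
Q-tensor then it is an R₀-tensor. -/
theorem even_Q_implies_R0 (m : ℕ) (hm : 2 ≤ m) (heven : Even m)
    (x y : Fin 2 → ℝ) (hxy : LinearIndependent ℝ ![x, y])
    (hQ : ∀ q : Fin 2 → ℝ, ∃ u, tcpSol2 (act2 m 1 (-1) x y) q u) :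
    ∀ u : Fin 2 → ℝ, tcpSol2 (act2 m 1 (-1) x y) 0 u → u = 0 := by
  intro u hsol
  by_contra hne
  have hn : Odd (m - 1) := Nat.Even.sub_odd (by omega) heven odd_one
  have hm' : (m - 1) + 1 = m := by omega
  obtain ⟨k, hki⟩ : ∃ k, u k ≠ 0 := by
    by_contra h; push_neg at h; exact hne (funext fun i => h i)
  have hk : 0 < u k := (hsol.1 k).lt_of_ne (Ne.symm hki)
  have hkBound := k.isLt
  set j : Fin 2 := ⟨1 - k.val, by omega⟩ with hj
  have hkj : k ≠ j := by
    intro hh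
    rw [Fin.ext_iff] at hh
    simp only [hj] at hh
    omega
  have hD := det_ne x y hxy
  have hdet : ∀ a b : Fin 2, a ≠ b → x a * y b - x b * y a ≠ 0 := by
    intro a b hab
    have ha2 := a.isLt
    have hb2 := b.isLt
    have hvne : a.val ≠ b.val := fun h => hab (Fin.ext h)
    have hcases : (a.val = 0 ∧ b.val = 1) ∨ (a.val = 1 ∧ b.val = 0) := by omega
    rcases hcases with ⟨h1, h2⟩ | ⟨h1, h2⟩
    · have ha : a = 0 := Fin.ext h1
      have hb : b = 1 := Fin.ext h2
      subst ha; subst hb; exact hD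
    · have ha : a = 1 := Fin.ext h1
      have hb : b = 0 := Fin.ext h2
      subst ha; subst hb
      intro h; exact hD (by linarith)
  have hdet' : ∀ a b : Fin 2, a ≠ b → x a * (-y) b - x b * (-y) a ≠ 0 := by
    intro a b hab h
    exact hdet a b hab (by simp only [Pi.neg_apply] at h; linarith)
  -- derive A^m = B^m
  obtain ⟨hu0, hF0, hsum⟩ := hsol
  have hF0' : ∀ i, 0 ≤ act2 m 1 (-1) x y u i := by
    intro i; have := hF0 i; simpa using this
  have hsum' : ∑ i, u i * act2 m 1 (-1) x y u i = 0 := by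
    have := hsum; simpa using this
  have hAsum : (∑ i, x i * u i) = x k * u k + x j * u j := sum2 k j hkj _
  have hBsum : (∑ i, y i * u i) = y k * u k + y j * u j := sum2 k j hkj _
  have hssum : (∑ i, u i * act2 m 1 (-1) x y u i) =
      u k * act2 m 1 (-1) x y u k + u j * act2 m 1 (-1) x y u j := sum2 k j hkj _
  have hact : ∀ i, act2 m 1 (-1) x y u i =
      x i * (∑ i, x i * u i) ^ (m - 1) - y i * (∑ i, y i * u i) ^ (m - 1) := by
    intro i; simp only [act2]; ring
  have hABm : (∑ i, x i * u i) ^ m = (∑ i, y i * u i) ^ m := by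
    rw [hssum, hact k, hact j] at hsum'
    have hmA : (∑ i, x i * u i) ^ m =
        (∑ i, x i * u i) * (∑ i, x i * u i) ^ (m - 1) :=
      pow_red _ (by omega)
    have hmB : (∑ i, y i * u i) ^ m =
        (∑ i, y i * u i) * (∑ i, y i * u i) ^ (m - 1) :=
      pow_red _ (by omega)
    rw [hmA, hmB]
    linear_combination hsum' + ((∑ i, x i * u i) ^ (m - 1)) * hAsum
      - ((∑ i, y i * u i) ^ (m - 1)) * hBsum
  have habs : |(∑ i, x i * u i)| = |(∑ i, y i * u i)| := by
    rcases lt_trichotomy |(∑ i, x i * u i)| |(∑ i, y i * u i)| with h | h | h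
    · exfalso
      have := pow_lt_pow_left₀ h (abs_nonneg _) (by omega : m ≠ 0)
      rw [Even.pow_abs heven, Even.pow_abs heven] at this; linarith
    · exact h
    · exfalso
      have := pow_lt_pow_left₀ h (abs_nonneg _) (by omega : m ≠ 0)
      rw [Even.pow_abs heven, Even.pow_abs heven] at this; linarith
  rcases eq_or_ne (∑ i, x i * u i) 0 with hA0 | hA0
  · -- A = 0 hence B = 0, contradicting u k > 0 via the determinant
    have hB0 : (∑ i, y i * u i) = 0 := by
      rw [hA0] at habs; simpa [abs_eq_zero] using habs.symm
    rw [hAsum] at hA0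
    rw [hBsum] at hB0
    have hk0 : (x k * y j - x j * y k) * u k = 0 := by
      linear_combination y j * hA0 - x j * hB0
    rcases mul_eq_zero.1 hk0 with h | h
    · exact hdet k j hkj h
    · exact hk.ne' h
  · rcases abs_eq_abs.1 habs with hBA | hBA
    · -- B = A
      exact L2 m hm heven x y hdet hQ u ⟨hu0, hF0, hsum⟩ k j hkj hk hBA.symm hA0
    · -- B = -A : replace y by -y
      have hQ' : ∀ q : Fin 2 → ℝ, ∃ u, tcpSol2 (act2 m 1 (-1) x (-y)) q u := by
        rw [act2_negy m hn x y]; exact hQ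
      have hsol' : tcpSol2 (act2 m 1 (-1) x (-y)) 0 u := by
        rw [act2_negy m hn x y]; exact ⟨hu0, hF0, hsum⟩
      have hba' : (∑ i, (-y) i * u i) = (∑ i, x i * u i) := by
        have hnegsum : (∑ i, (-y) i * u i) = -(∑ i, y i * u i) := by
          rw [Fin.sum_univ_two, Fin.sum_univ_two]
          simp only [Pi.neg_apply]
          ring
        rw [hnegsum]; linarith [hBA]
      exact L2 m hm heven x (-y) hdet' hQ' u hsol' k j hkj hk hba' hA0
end

section
/- Let m ≥ 2 be even and x, y ∈ ℝ² linearly independent, and A = −x^{⊗m} − y^{⊗m}, so (A u^{m-1})_i = −x_i(xᵀu)^{m-1} − y_i(yᵀu)^{m-1}. Then A is not a Q-tensor: for any q ∈ ℝ² with q₁ < 0 and q₂ < 0, TCP(A, q) has no solution. -/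
lemma no_sol_aux (m : ℕ) (hm : 2 ≤ m) (heven : Even m)
    (x y : Fin 2 → ℝ) (q : Fin 2 → ℝ) (hq0 : q 0 < 0) (hq1 : q 1 < 0) :
    ¬ ∃ u, tcpSol2 (act2 m (-1) (-1) x y) q u := by
  rintro ⟨u, hu, hFq, hsum⟩
  set s : ℝ := ∑ j, x j * u j with hs
  set t : ℝ := ∑ j, y j * u j with ht
  have hsm : s * s ^ (m - 1) = s ^ m := by
    rw [← pow_succ']
    congr 1
    omega
  have htm : t * t ^ (m - 1) = t ^ m := by
    rw [← pow_succ']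
    congr 1
    omega
  have hsum' : u 0 * (act2 m (-1) (-1) x y u 0 + q 0)
      + u 1 * (act2 m (-1) (-1) x y u 1 + q 1) = 0 := by
    simpa [Fin.sum_univ_two] using hsum
  have hexp : -(s ^ m) - t ^ m + (u 0 * q 0 + u 1 * q 1) = 0 := by
    simp only [act2, ← hs, ← ht] at hsum'
    have hsdef : s = x 0 * u 0 + x 1 * u 1 := by simp [hs, Fin.sum_univ_two]
    have htdef : t = y 0 * u 0 + y 1 * u 1 := by simp [ht, Fin.sum_univ_two]
    have e1 : u 0 * (x 0 * s ^ (m - 1)) + u 1 * (x 1 * s ^ (m - 1)) = s ^ m := by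
      rw [← hsm, hsdef]; ring
    have e2 : u 0 * (y 0 * t ^ (m - 1)) + u 1 * (y 1 * t ^ (m - 1)) = t ^ m := by
      rw [← htm, htdef]; ring
    linear_combination hsum' + e1 + e2
  have hsnn : 0 ≤ s ^ m := heven.pow_nonneg s
  have htnn : 0 ≤ t ^ m := heven.pow_nonneg t
  have hu0q : u 0 * q 0 ≤ 0 := mul_nonpos_of_nonneg_of_nonpos (hu 0) hq0.le
  have hu1q : u 1 * q 1 ≤ 0 := mul_nonpos_of_nonneg_of_nonpos (hu 1) hq1.le
  have hu0 : u 0 = 0 := by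
    by_contra h
    have : 0 < u 0 := lt_of_le_of_ne (hu 0) (Ne.symm h)
    nlinarith
  have hu1 : u 1 = 0 := by
    by_contra h
    have : 0 < u 1 := lt_of_le_of_ne (hu 1) (Ne.symm h)
    nlinarith
  have hs0 : s = 0 := by simp [hs, Fin.sum_univ_two, hu0, hu1]
  have ht0 : t = 0 := by simp [ht, Fin.sum_univ_two, hu0, hu1]
  have := hFq 0
  rw [act2] at this
  rw [← hs, ← ht, hs0, ht0, zero_pow (by omega : m - 1 ≠ 0)] at this
  simp at this
  linarith

/-- For even `m` and linearly independent `x, y`, the tensor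
`A = -x^{⊗m} - y^{⊗m}` is not a Q-tensor: for any `q` with both components
negative, `TCP(A, q)` has no solution. -/
theorem even_neg_not_Q (m : ℕ) (hm : 2 ≤ m) (heven : Even m)
    (x y : Fin 2 → ℝ) (hxy : LinearIndependent ℝ ![x, y]) :
    (∀ q : Fin 2 → ℝ, q 0 < 0 → q 1 < 0 →
      ¬ ∃ u, tcpSol2 (act2 m (-1) (-1) x y) q u) ∧
    ¬ (∀ q : Fin 2 → ℝ, ∃ u, tcpSol2 (act2 m (-1) (-1) x y) q u) := by
  refine ⟨fun q hq0 hq1 => no_sol_aux m hm heven x y q hq0 hq1, fun h => ?_⟩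
  exact no_sol_aux m hm heven x y (fun _ => -1) (by norm_num) (by norm_num)
    (h (fun _ => -1))
end
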